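/- For integers 1 ≤ ℓ ≤ ℓ′ and k ≥ r ≥ 3, the quantity X := f(k,r,ℓ+ℓ′) − f(k,r,ℓ) − f(k,r,ℓ′) + ℓ·C(k/ℓ, r) is nonnegative, where f(k,r,L) = (L/2)·Σ_{i=0}^∞ C(k/(2^i L), r) and C(·,r) is the extended binomial coefficient. -/

import Mathlib

/-- The extended binomial coefficient: `z(z-1)⋯(z-r+1)/r!` when `z ≥ r-1`, and `0` otherwise. -/
noncomputable def extBinom (z : ℝ) (r : ℕ) : ℝ :=
  if (r : ℝ) - 1 ≤ z then (∏ j ∈ Finset.range r, (z - (j : ℝ))) / (Nat.factorial r) else 0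

/-- `f(k,r,L) = (L/2) Σ_{i≥0} C(k/(2^i L), r)` -/
noncomputable def fL (k r : ℕ) (L : ℝ) : ℝ :=
  (L / 2) * ∑' i : ℕ, extBinom ((k : ℝ) / (2 ^ i * L)) r

open Set Finset

private lemma convexOn_congr_fun {s : Set ℝ} {f g : ℝ → ℝ} (hf : ConvexOn ℝ s f)
    (h : ∀ x ∈ s, f x = g x) : ConvexOn ℝ s g :=
  ⟨hf.1, fun x hx y hy a b ha hb hab => by
    rw [← h _ hx, ← h _ hy, ← h _ (hf.1 hx hy ha hb hab)]
    exact hf.2 hx hy ha hb hab⟩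

private lemma factor_convex (k c d : ℝ) (hk : 0 ≤ k) :
    ConvexOn ℝ (Ioc 0 d) (fun x : ℝ => k / x - c) := by
  have h1 : ConvexOn ℝ (Ioi (0:ℝ)) (fun x : ℝ => x ^ (-1 : ℤ)) := convexOn_zpow (-1)
  have h2 : ConvexOn ℝ (Ioi (0:ℝ)) (fun x : ℝ => k • x ^ (-1 : ℤ)) := h1.smul hk
  have h3 := (h2.add_const (-c)).subset Ioc_subset_Ioi_self (convex_Ioc 0 d)
  refine convexOn_congr_fun h3 ?_
  intro x _
  simp [zpow_neg, div_eq_mul_inv, sub_eq_add_neg]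

private lemma factor_antitone (k c d : ℝ) (hk : 0 ≤ k) :
    AntitoneOn (fun x : ℝ => k / x - c) (Ioc 0 d) := by
  intro x hx y hy hxy
  have h : k / y ≤ k / x := div_le_div_of_nonneg_left hk hx.1 hxy
  simpa using sub_le_sub_right h c

private lemma mem_bound {k : ℝ} {r : ℕ} (hr1 : (0:ℝ) < (r:ℝ) - 1) {x : ℝ}
    (hx : x ∈ Ioc 0 (k / ((r:ℝ)-1))) : (r:ℝ) - 1 ≤ k / x := by
  rw [le_div_iff₀ hx.1]
  have h := (le_div_iff₀ hr1).1 hx.2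
  nlinarith

private lemma prod_lemma (k : ℝ) (r : ℕ) (hr : 3 ≤ r) (hk : 0 < k) :
    ∀ m : ℕ, m ≤ r - 1 →
    ConvexOn ℝ (Ioc 0 (k/((r:ℝ)-1))) (fun x => ∏ j ∈ Finset.range m, (k / x - ((j:ℝ)+1)))
    ∧ AntitoneOn (fun x => ∏ j ∈ Finset.range m, (k / x - ((j:ℝ)+1))) (Ioc 0 (k/((r:ℝ)-1)))
    ∧ ∀ x ∈ Ioc 0 (k/((r:ℝ)-1)), 0 ≤ ∏ j ∈ Finset.range m, (k / x - ((j:ℝ)+1)) := by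
  have hr1 : (0:ℝ) < (r:ℝ) - 1 := by
    have : (3:ℝ) ≤ (r:ℝ) := by exact_mod_cast hr
    linarith
  intro m
  induction m with
  | zero =>
      intro _
      simp only [Finset.range_zero, Finset.prod_empty]
      exact ⟨convexOn_const 1 (convex_Ioc _ _), antitoneOn_const, fun x _ => zero_le_one⟩
  | succ m ih =>
      intro hm
      obtain ⟨hc, ha, hn⟩ := ih (le_trans (Nat.le_succ m) hm)
      have hmr : (m:ℝ) + 1 ≤ (r:ℝ) - 1 := by
        have : (m:ℝ) + 2 ≤ (r:ℝ) := by exact_mod_cast (by omega : m + 2 ≤ r)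
        linarith
      have hfc : ConvexOn ℝ (Ioc 0 (k/((r:ℝ)-1))) (fun x : ℝ => k / x - ((m:ℝ)+1)) :=
        factor_convex k _ _ hk.le
      have hfa : AntitoneOn (fun x : ℝ => k / x - ((m:ℝ)+1)) (Ioc 0 (k/((r:ℝ)-1))) :=
        factor_antitone k _ _ hk.le
      have hfn : ∀ x ∈ Ioc 0 (k/((r:ℝ)-1)), 0 ≤ k / x - ((m:ℝ)+1) := by
        intro x hx
        have := mem_bound hr1 hx
        linarith
      simp only [Finset.prod_range_succ]
      refine ⟨?_, ?_, ?_⟩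
      · exact hc.mul hfc hn hfn (ha.monovaryOn hfa)
      · intro x hx y hy hxy
        exact mul_le_mul (ha hx hy hxy) (hfa hx hy hxy) (hfn y hy) (hn x hx)
      · intro x hx
        exact mul_nonneg (hn x hx) (hfn x hx)

private lemma glue_convex {F : ℝ → ℝ} {d : ℝ} (hd : 0 < d)
    (hc : ConvexOn ℝ (Ioc 0 d) F) (hnn : ∀ x ∈ Ioc 0 d, 0 ≤ F x) (hFd : F d = 0) :
    ConvexOn ℝ (Ioi 0) (fun x => if x ≤ d then F x else 0) := by
  set f : ℝ → ℝ := fun x => if x ≤ d then F x else 0 with hf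
  have fnn : ∀ x ∈ Ioi (0:ℝ), 0 ≤ f x := by
    intro x hx
    by_cases hxd : x ≤ d
    · simpa [f, hxd] using hnn x ⟨hx, hxd⟩
    · simp [f, hxd]
  have aux : ∀ x ∈ Ioi (0:ℝ), ∀ y ∈ Ioi (0:ℝ), x ≤ y → ∀ a b : ℝ, 0 ≤ a → 0 ≤ b → a + b = 1 →
      f (a * x + b * y) ≤ a * f x + b * f y := by
    intro x hx y hy hxy a b ha hb hab
    set z := a * x + b * y with hz
    have hzx : z - x = b * (y - x) := by rw [hz]; linear_combination x * hab
    have hzy : y - z = a * (y - x) := by rw [hz]; linear_combination (-y) * hab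
    have hxz : x ≤ z := by nlinarith [mul_nonneg hb (sub_nonneg.2 hxy)]
    have hzyl : z ≤ y := by nlinarith [mul_nonneg ha (sub_nonneg.2 hxy)]
    have hz0 : (0:ℝ) < z := lt_of_lt_of_le hx hxz
    have hrhs : 0 ≤ a * f x + b * f y :=
      add_nonneg (mul_nonneg ha (fnn x hx)) (mul_nonneg hb (fnn y hy))
    by_cases hzd : z ≤ d
    · have hfz : f z = F z := if_pos hzd
      have hxd : x ≤ d := le_trans hxz hzd
      have hfx : f x = F x := if_pos hxd
      by_cases hyd : y ≤ d
      · have hfy : f y = F y := if_pos hyd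
        rw [hfz, hfx, hfy]
        have := hc.2 ⟨hx, hxd⟩ ⟨hy, hyd⟩ ha hb hab
        simpa using this
      · push_neg at hyd
        have hfy : f y = 0 := if_neg (not_le.2 hyd)
        rw [hfy, mul_zero, add_zero, hfz, hfx]
        by_cases hxd' : x = d
        · have hzd' : z = d := le_antisymm hzd (by rw [← hxd']; exact hxz)
          rw [hzd', hFd, hxd', hFd, mul_zero]
        · have hxd2 : x < d := lt_of_le_of_ne hxd hxd'
          set s := (d - z)/(d - x) with hs
          have hdx : (0:ℝ) < d - x := sub_pos.2 hxd2
          have hs0 : 0 ≤ s := div_nonneg (sub_nonneg.2 hzd) hdx.le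
          have hs1 : s ≤ 1 := by rw [hs, div_le_one hdx]; linarith
          have hcomb : s * x + (1 - s) * d = z := by
            rw [hs]; field_simp; ring
          have hs1' : 0 ≤ 1 - s := by linarith
          have hsum : s + (1 - s) = 1 := by ring
          have hcz : F z ≤ s * F x + (1 - s) * F d := by
            have h2 := hc.2 ⟨hx, hxd⟩ ⟨hd, le_refl d⟩ hs0 hs1' hsum
            simp only [smul_eq_mul] at h2
            rw [hcomb] at h2
            exact h2
          have hsa : s ≤ a := by
            rw [hs, div_le_iff₀ hdx]
            have hkey : d - z = a * (d - x) + b * (d - y) := by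
              rw [hz]; linear_combination (-d) * hab
            nlinarith [mul_nonneg hb (sub_nonneg.2 hyd.le)]
          calc F z ≤ s * F x + (1 - s) * F d := hcz
            _ = s * F x := by rw [hFd]; ring
            _ ≤ a * F x := mul_le_mul_of_nonneg_right hsa (hnn x ⟨hx, hxd⟩)
    · have hfz : f z = 0 := if_neg hzd
      rw [hfz]; exact hrhs
  refine ⟨convex_Ioi 0, ?_⟩
  intro x hx y hy a b ha hb hab
  simp only [smul_eq_mul]
  rcases le_total x y with h | h
  · exact aux x hx y hy h a b ha hb hab
  · have h2 := aux y hy x hx h b a hb ha (by linarith)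
    calc f (a * x + b * y) = f (b * y + a * x) := by rw [add_comm]
      _ ≤ b * f y + a * f x := h2
      _ = a * f x + b * f y := by ring

private lemma G_convex (k : ℝ) (r : ℕ) (hr : 3 ≤ r) (hk : 0 < k) :
    ConvexOn ℝ (Ioi 0) (fun L : ℝ => L * extBinom (k / L) r) := by
  have hr1 : (0:ℝ) < (r:ℝ) - 1 := by
    have : (3:ℝ) ≤ (r:ℝ) := by exact_mod_cast hr
    linarith
  set d := k / ((r:ℝ)-1) with hdd
  have hd : 0 < d := div_pos hk hr1
  have hfact : (0:ℝ) < (r.factorial : ℝ) := by exact_mod_cast r.factorial_pos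
  set F : ℝ → ℝ :=
    fun x => (k / (r.factorial : ℝ)) • ∏ j ∈ Finset.range (r-1), (k / x - ((j:ℝ)+1)) with hF
  obtain ⟨hc, _, hn⟩ := prod_lemma k r hr hk (r-1) le_rfl
  have hFc : ConvexOn ℝ (Ioc 0 d) F := hc.smul (div_nonneg hk.le hfact.le)
  have hFn : ∀ x ∈ Ioc 0 d, 0 ≤ F x := fun x hx =>
    smul_nonneg (div_nonneg hk.le hfact.le) (hn x hx)
  have hkd : k / d = (r:ℝ) - 1 := by
    rw [hdd, div_div_eq_mul_div, mul_comm, mul_div_assoc, div_self hk.ne', mul_one]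
  have hFd : F d = 0 := by
    have hmem : r - 1 - 1 ∈ Finset.range (r-1) := Finset.mem_range.2 (by omega)
    have hcast : ((r - 1 - 1 : ℕ) : ℝ) = (r:ℝ) - 2 := by
      have h2 : ((r - 1 - 1 : ℕ) : ℝ) + 2 = ((r - 1 - 1 + 2 : ℕ) : ℝ) := by push_cast; ring
      have h3 : r - 1 - 1 + 2 = r := by omega
      rw [h3] at h2
      linarith
    have hterm : k / d - (((r - 1 - 1 : ℕ) : ℝ) + 1) = 0 := by
      rw [hkd, hcast]; ring
    have hprod : (∏ j ∈ Finset.range (r-1), (k / d - ((j:ℝ)+1))) = 0 :=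
      Finset.prod_eq_zero hmem hterm
    rw [hF]
    simp [hprod]
  have hglue := glue_convex hd hFc hFn hFd
  refine convexOn_congr_fun hglue ?_
  intro x hx
  have hx0 : (0:ℝ) < x := hx
  by_cases hxd : x ≤ d
  · have hcond : (r:ℝ) - 1 ≤ k / x := mem_bound hr1 ⟨hx0, hxd⟩
    rw [if_pos hxd]
    unfold extBinom
    rw [if_pos hcond]
    have hprod : (∏ j ∈ Finset.range r, (k / x - (j:ℝ)))
        = (∏ j ∈ Finset.range (r-1), (k / x - ((j:ℝ)+1))) * (k / x - 0) := by
      conv_lhs => rw [show r = (r-1) + 1 from by omega]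
      rw [Finset.prod_range_succ']
      push_cast
      rfl
    rw [hprod, hF]
    have hxne : x ≠ 0 := hx0.ne'
    simp only [smul_eq_mul, sub_zero]
    generalize (∏ j ∈ Finset.range (r-1), (k / x - ((j:ℝ)+1))) = P
    field_simp
  · rw [if_neg hxd]
    have hcond : ¬ ((r:ℝ) - 1 ≤ k / x) := by
      intro hcon
      apply hxd
      rw [hdd, le_div_iff₀ hr1]
      have := (le_div_iff₀ hx0).1 hcon
      nlinarith
    unfold extBinom
    rw [if_neg hcond, mul_zero]

private lemma four_point (k : ℝ) (r : ℕ) (hr : 3 ≤ r) (hk : 0 < k) {A B : ℝ}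
    (hA : 0 < A) (hAB : A ≤ B) :
    2 * A * extBinom (k / (2 * A)) r + B * extBinom (k / B) r ≤
      (A + B) * extBinom (k / (A + B)) r + A * extBinom (k / A) r := by
  have hB : (0:ℝ) < B := lt_of_lt_of_le hA hAB
  have hconv := G_convex k r hr hk
  set g : ℝ → ℝ := fun L : ℝ => L * extBinom (k / L) r with hg
  set t : ℝ := (B - A)/B with ht
  have ht0 : 0 ≤ t := div_nonneg (sub_nonneg.2 hAB) hB.le
  have hs0 : 0 ≤ 1 - t := by
    rw [ht]
    have : (B - A)/B ≤ 1 := by rw [div_le_one hB]; linarith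
    linarith
  have hmA : A ∈ Ioi (0:ℝ) := hA
  have hmAB : A + B ∈ Ioi (0:ℝ) := by
    simp only [Set.mem_Ioi]; linarith
  have h1 := hconv.2 hmA hmAB ht0 hs0 (by ring)
  have h2 := hconv.2 hmA hmAB hs0 ht0 (by ring)
  simp only [smul_eq_mul] at h1 h2
  have e1 : t * A + (1 - t) * (A + B) = 2 * A := by
    rw [ht]; field_simp; ring
  have e2 : (1 - t) * A + t * (A + B) = B := by
    rw [ht]; field_simp; ring
  rw [e1] at h1
  rw [e2] at h2
  have := add_le_add h1 h2
  calc 2 * A * extBinom (k / (2 * A)) r + B * extBinom (k / B) r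
      = g (2 * A) + g B := by rw [hg]
    _ ≤ (t * g A + (1 - t) * g (A + B)) + ((1 - t) * g A + t * g (A + B)) := this
    _ = g A + g (A + B) := by ring
    _ = (A + B) * extBinom (k / (A + B)) r + A * extBinom (k / A) r := by rw [hg]; ring

private lemma vanish (k r : ℕ) (hr : 3 ≤ r) {L : ℝ} (hL : 1 ≤ L) {i : ℕ} (hi : k ≤ i) :
    extBinom ((k:ℝ) / (2 ^ i * L)) r = 0 := by
  have h2i : (0:ℝ) < 2 ^ i := by positivity
  have h2L : (0:ℝ) < 2 ^ i * L := by nlinarith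
  have hk2 : (k:ℝ) < 2 ^ i := by
    calc (k:ℝ) < 2 ^ k := by exact_mod_cast Nat.lt_two_pow_self
      _ ≤ 2 ^ i := by
          exact pow_le_pow_right₀ one_le_two hi
  have hr3 : (3:ℝ) ≤ (r:ℝ) := by exact_mod_cast hr
  unfold extBinom
  rw [if_neg]
  push_neg
  rw [div_lt_iff₀ h2L]
  nlinarith

private lemma fL_eq (k r : ℕ) (hr : 3 ≤ r) {L : ℝ} (hL : 1 ≤ L) :
    fL k r L = (L / 2) * ∑ i ∈ Finset.range k, extBinom ((k:ℝ) / (2 ^ i * L)) r := by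
  unfold fL
  congr 1
  exact tsum_eq_sum (fun i hi => vanish k r hr hL (by simpa using Finset.mem_range.not.1 hi))

theorem X_nonneg (k r ℓ ℓ' : ℕ) (hr : 3 ≤ r) (hk : r ≤ k)
    (hl : 1 ≤ ℓ) (hll : ℓ ≤ ℓ') :
    0 ≤ fL k r ((ℓ : ℝ) + (ℓ' : ℝ)) - fL k r (ℓ : ℝ) - fL k r (ℓ' : ℝ)
        + (ℓ : ℝ) * extBinom ((k : ℝ) / (ℓ : ℝ)) r := by
  set a : ℝ := (ℓ : ℝ) with haa
  set b : ℝ := (ℓ' : ℝ) with hbb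
  have ha1 : (1:ℝ) ≤ a := by rw [haa]; exact_mod_cast hl
  have hb1 : (1:ℝ) ≤ b := by rw [hbb]; exact_mod_cast le_trans hl hll
  have hab : a ≤ b := by rw [haa, hbb]; exact_mod_cast hll
  have hkr : (0:ℝ) < (k:ℝ) := by
    have : 3 ≤ k := le_trans hr hk
    exact_mod_cast Nat.pos_of_ne_zero (by omega)
  have hab1 : (1:ℝ) ≤ a + b := by linarith
  -- telescoping identity
  have tel : (∑ i ∈ Finset.range k,
      (a * extBinom ((k:ℝ) / (2 ^ i * a)) r - a * extBinom ((k:ℝ) / (2 ^ (i+1) * a)) r))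
      = a * extBinom ((k:ℝ) / a) r := by
    rw [Finset.sum_range_sub' (f := fun i => a * extBinom ((k:ℝ) / (2 ^ i * a)) r)]
    rw [vanish k r hr ha1 (le_refl k)]
    norm_num
  rw [fL_eq k r hr hab1, fL_eq k r hr ha1, fL_eq k r hr hb1, ← tel]
  rw [Finset.mul_sum, Finset.mul_sum, Finset.mul_sum, ← Finset.sum_sub_distrib,
    ← Finset.sum_sub_distrib, ← Finset.sum_add_distrib]
  apply Finset.sum_nonneg
  intro i _
  have h2i : (0:ℝ) < 2 ^ i := by positivity
  have hA : (0:ℝ) < 2 ^ i * a := by nlinarith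
  have hAB : 2 ^ i * a ≤ 2 ^ i * b := by nlinarith
  have h4 := four_point (k:ℝ) r hr hkr hA hAB
  rw [show (2:ℝ) * (2 ^ i * a) = 2 ^ (i+1) * a from by ring,
    show (2:ℝ) ^ i * a + 2 ^ i * b = 2 ^ i * (a + b) from by ring] at h4
  have hp : (0:ℝ) < 2 ^ (i+1) := by positivity
  rw [← mul_nonneg_iff_of_pos_right hp]
  have hexp : ((a + b) / 2 * extBinom ((k:ℝ) / (2 ^ i * (a + b))) r
      - a / 2 * extBinom ((k:ℝ) / (2 ^ i * a)) r
      - b / 2 * extBinom ((k:ℝ) / (2 ^ i * b)) r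
      + (a * extBinom ((k:ℝ) / (2 ^ i * a)) r - a * extBinom ((k:ℝ) / (2 ^ (i+1) * a)) r))
      * 2 ^ (i+1)
      = ((2 ^ i * (a + b)) * extBinom ((k:ℝ) / (2 ^ i * (a + b))) r
          + (2 ^ i * a) * extBinom ((k:ℝ) / (2 ^ i * a)) r)
        - ((2 ^ (i+1) * a) * extBinom ((k:ℝ) / (2 ^ (i+1) * a)) r
          + (2 ^ i * b) * extBinom ((k:ℝ) / (2 ^ i * b)) r) := by
    ring
  rw [hexp]
  linarith
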